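/- Let ζ ∈ ℂ, let Λ be a polynomial over ℂ, let q₊(z) = ∏_{m=1}^{N}(z − w_m) have pairwise distinct roots none of which is a root of Λ, and suppose there is a polynomial q₋ with q₋′q₊ − q₋q₊′ + 2ζ q₋q₊ = Λ. Then the roots w_ℓ satisfy the sl(2) Gaudin Bethe equations: for every ℓ, 2ζ + Λ′(w_ℓ)/Λ(w_ℓ) = ∑_{m ≠ ℓ} 2/(w_ℓ − w_m). -/

import Mathlib

open Polynomial Finset

private lemma poly_derivative_finset_prod' {ι : Type*} [DecidableEq ι] (s : Finset ι)
    (f : ι → Polynomial ℂ) :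
    derivative (∏ i ∈ s, f i) = ∑ i ∈ s, (∏ j ∈ s.erase i, f j) * derivative (f i) := by
  induction s using Finset.induction with
  | empty => simp
  | @insert a t ha ih =>
    have step : ∀ i ∈ t, (∏ j ∈ (insert a t).erase i, f j) * derivative (f i)
        = f a * ((∏ j ∈ t.erase i, f j) * derivative (f i)) := by
      intro i hi
      have hia : i ≠ a := fun h => ha (h ▸ hi)
      rw [Finset.erase_insert_of_ne hia.symm,
        Finset.prod_insert fun h => ha (Finset.mem_of_mem_erase h)]
      ring
    rw [Finset.prod_insert ha, derivative_mul, ih, Finset.sum_insert ha,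
      Finset.erase_insert ha, Finset.mul_sum, Finset.sum_congr rfl step]
    ring

/-- Nondegenerate solutions of the sl(2) qq-system satisfy the sl(2) Gaudin
Bethe equations. -/
theorem sl2_qq_implies_bethe (ζ : ℂ) (Λ : Polynomial ℂ) (N : ℕ)
    (w : Fin N → ℂ) (hw : Function.Injective w) (qp : Polynomial ℂ)
    (hq : qp = ∏ m : Fin N, (X - C (w m)))
    (hΛ : ∀ ℓ : Fin N, Λ.eval (w ℓ) ≠ 0) (qm : Polynomial ℂ)
    (hqq : derivative qm * qp - qm * derivative qp + C (2 * ζ) * (qm * qp) = Λ) :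
    ∀ ℓ : Fin N,
      2 * ζ + (derivative Λ).eval (w ℓ) / Λ.eval (w ℓ)
        = ∑ m ∈ Finset.univ.erase ℓ, 2 / (w ℓ - w m) := by
  intro ℓ
  set s := Finset.univ.erase ℓ with hs
  set P : Polynomial ℂ := ∏ m ∈ s, (X - C (w m)) with hP
  have hqp : qp = (X - C (w ℓ)) * P := by
    rw [hq, hP, ← Finset.mul_prod_erase _ _ (Finset.mem_univ ℓ)]
  set A := P.eval (w ℓ) with hA
  have hAval : A = ∏ m ∈ s, (w ℓ - w m) := by
    simp [hA, hP, eval_prod]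
  have hsub : ∀ m ∈ s, w ℓ - w m ≠ 0 := by
    intro m hm
    have : w ℓ ≠ w m := fun h => (Finset.mem_erase.1 hm).1 (hw h).symm
    exact sub_ne_zero.2 this
  have hAne : A ≠ 0 := by
    rw [hAval]
    exact Finset.prod_ne_zero_iff.2 hsub
  have hq0 : qp.eval (w ℓ) = 0 := by rw [hqp]; simp
  have hd1 : (derivative qp).eval (w ℓ) = A := by
    rw [hqp]; simp [derivative_mul]; exact hA.symm
  set B := (derivative P).eval (w ℓ) with hB
  have hd2 : (derivative (derivative qp)).eval (w ℓ) = 2 * B := by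
    rw [hqp]
    simp only [derivative_mul, derivative_sub, derivative_X, derivative_C,
      derivative_add, derivative_one, eval_add, eval_mul, eval_sub, eval_X,
      eval_C, eval_one, sub_self, zero_mul, mul_zero, sub_zero, zero_sub,
      one_mul, add_zero, zero_add]
    ring
  have h0 : Λ.eval (w ℓ) = -(qm.eval (w ℓ) * A) := by
    have h := congrArg (eval (w ℓ)) hqq
    simp [hq0, hd1] at h
    linear_combination -h
  have hD : (derivative Λ).eval (w ℓ)
      = -(2 * qm.eval (w ℓ) * B) + 2 * ζ * (qm.eval (w ℓ) * A) := by
    have h := congrArg (fun p => (derivative p).eval (w ℓ)) hqq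
    simp only [derivative_add, derivative_sub, derivative_mul, derivative_C,
      eval_add, eval_sub, eval_mul, eval_C, zero_mul, zero_add] at h
    rw [hq0, hd1, hd2] at h
    linear_combination -h
  have hqmne : qm.eval (w ℓ) ≠ 0 := by
    intro h
    exact hΛ ℓ (by rw [h0, h]; ring)
  have hBval : B = ∑ m ∈ s, ∏ k ∈ s.erase m, (w ℓ - w k) := by
    rw [hB, hP, poly_derivative_finset_prod']
    simp [eval_finset_sum, eval_prod]
  have key : ∀ m ∈ s, 2 / (w ℓ - w m) = 2 * (∏ k ∈ s.erase m, (w ℓ - w k)) / A := by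
    intro m hm
    have hAm : A = (w ℓ - w m) * ∏ k ∈ s.erase m, (w ℓ - w k) := by
      rw [hAval, ← Finset.mul_prod_erase _ _ hm]
    have hx := hsub m hm
    have hp : (∏ k ∈ s.erase m, (w ℓ - w k)) ≠ 0 :=
      Finset.prod_ne_zero_iff.2 fun k hk => hsub k (Finset.mem_of_mem_erase hk)
    rw [hAm]
    field_simp
  rw [Finset.sum_congr rfl key, ← Finset.sum_div, ← Finset.mul_sum, ← hBval]
  rw [h0, hD]
  have hΛne := hΛ ℓ
  rw [h0] at hΛne
  field_simp
  ring
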